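/- There is no finite simple graph G on 6 vertices such that the Hilbert series of the quotient of the exterior algebra by the edge ideal of G equals 1 + 6t + 9t^2 + t^3; equivalently, there is no simple graph on 6 vertices with exactly 6 edges (hence 9 non-edges) having exactly one independent set of size 3 and no independent set of size 4. -/

import Mathlib

/-- A finset of vertices is an independent set of the graph `G`. -/
def SimpleGraph.IsIndepFinset {α : Type*} (G : SimpleGraph α) (s : Finset α) : Prop :=
  ∀ a ∈ s, ∀ b ∈ s, ¬ G.Adj a b

/-! ### Numeric encoding of graphs on 6 vertices

A graph on `Fin 6` is encoded by a natural number `n < 2^15` whose bits record which of the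
15 possible edges are present.  All the relevant conditions are checked by kernel computation
over all 32768 codes, and then transferred to arbitrary simple graphs. -/

/-- The index (in `Fin 15`) of the unordered pair `{a, b}` of distinct vertices. -/
def pidx (a b : Fin 6) : Fin 15 :=
  ⟨if a.val < b.val then b.val*(b.val-1)/2 + a.val
   else if b.val < a.val then a.val*(a.val-1)/2 + b.val else 0, by revert a b; decide⟩

/-- The pair of vertices with a given index; inverse of `pidx` up to swapping. -/
def pr : Fin 15 → Fin 6 × Fin 6 :=
  ![(0,1),(0,2),(1,2),(0,3),(1,3),(2,3),(0,4),(1,4),(2,4),(3,4),(0,5),(1,5),(2,5),(3,5),(4,5)]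

/-- The bit function of a code `n`. -/
def F (n : ℕ) (i : Fin 15) : Fin 2 := ⟨n / 2^i.val % 2, Nat.mod_lt _ two_pos⟩

/-- The graph on `Fin 6` determined by a bit function. -/
def graphOf (f : Fin 15 → Fin 2) : SimpleGraph (Fin 6) :=
  SimpleGraph.fromRel (fun a b => f (pidx a b) = 1)

instance (f : Fin 15 → Fin 2) : DecidableRel (graphOf f).Adj :=
  fun a b => inferInstanceAs (Decidable (a ≠ b ∧ (f (pidx a b) = 1 ∨ f (pidx b a) = 1)))

instance {α : Type*} (G : SimpleGraph α) [DecidableRel G.Adj] (s : Finset α) :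
    Decidable (G.IsIndepFinset s) :=
  inferInstanceAs (Decidable (∀ a ∈ s, ∀ b ∈ s, ¬ G.Adj a b))

/-- All 3-element subsets of `Fin 6`. -/
def triples : List (Finset (Fin 6)) :=
  [{0,1,2},{0,1,3},{0,1,4},{0,1,5},{0,2,3},{0,2,4},{0,2,5},{0,3,4},{0,3,5},{0,4,5},
   {1,2,3},{1,2,4},{1,2,5},{1,3,4},{1,3,5},{1,4,5},{2,3,4},{2,3,5},{2,4,5},{3,4,5}]

/-- All 4-element subsets of `Fin 6`. -/
def quads : List (Finset (Fin 6)) :=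
  [{0,1,2,3},{0,1,2,4},{0,1,2,5},{0,1,3,4},{0,1,3,5},{0,1,4,5},{0,2,3,4},{0,2,3,5},
   {0,2,4,5},{0,3,4,5},{1,2,3,4},{1,2,3,5},{1,2,4,5},{1,3,4,5},{2,3,4,5}]

/-- The bitmask of all pairs inside a subset `s`. -/
def maskOf (s : Finset (Fin 6)) : ℕ :=
  ((List.finRange 15).filter
    (fun i => decide ((pr i).1 ∈ s ∧ (pr i).2 ∈ s))).foldr (fun i acc => 2^i.val + acc) 0

def tripleMasks : List ℕ :=
  [7, 25, 193, 3073, 42, 322, 5122, 584, 9224, 17472, 52, 388, 6148, 656, 10256, 18560,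
   800, 12320, 20736, 25088]

def quadMasks : List ℕ :=
  [63, 455, 7175, 729, 11289, 19649, 874, 13354, 21826, 26184, 948, 14388, 22916, 27280, 29472]

/-- Number of edges of the graph with code `n`. -/
def ec (n : ℕ) : ℕ := (List.range 15).countP (fun i => decide (n / 2^i % 2 = 1))

/-- Number of independent triples of the graph with code `n`. -/
def tcnt (n : ℕ) : ℕ := tripleMasks.countP (fun m => decide (n &&& m = 0))

/-- Whether the graph with code `n` has no independent quadruple. -/
def qok (n : ℕ) : Bool := quadMasks.all (fun m => !decide (n &&& m = 0))

/-- `check n = true` iff the graph with code `n` is NOT a counterexample. -/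
def check (n : ℕ) : Bool := !(decide (ec n = 6) && decide (tcnt n = 1) && qok n)

/-- Check a block of 512 consecutive codes starting at `b`. -/
def go : ℕ → ℕ → Bool
  | 0, _ => true
  | k+1, b => check b && go k (b+1)

theorem chk0 : go 512 (512 * 0) = true := by decide +kernel
theorem chk1 : go 512 (512 * 1) = true := by decide +kernel
theorem chk2 : go 512 (512 * 2) = true := by decide +kernel
theorem chk3 : go 512 (512 * 3) = true := by decide +kernel
theorem chk4 : go 512 (512 * 4) = true := by decide +kernel
theorem chk5 : go 512 (512 * 5) = true := by decide +kernel
theorem chk6 : go 512 (512 * 6) = true := by decide +kernel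
theorem chk7 : go 512 (512 * 7) = true := by decide +kernel
theorem chk8 : go 512 (512 * 8) = true := by decide +kernel
theorem chk9 : go 512 (512 * 9) = true := by decide +kernel
theorem chk10 : go 512 (512 * 10) = true := by decide +kernel
theorem chk11 : go 512 (512 * 11) = true := by decide +kernel
theorem chk12 : go 512 (512 * 12) = true := by decide +kernel
theorem chk13 : go 512 (512 * 13) = true := by decide +kernel
theorem chk14 : go 512 (512 * 14) = true := by decide +kernel
theorem chk15 : go 512 (512 * 15) = true := by decide +kernel
theorem chk16 : go 512 (512 * 16) = true := by decide +kernel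
theorem chk17 : go 512 (512 * 17) = true := by decide +kernel
theorem chk18 : go 512 (512 * 18) = true := by decide +kernel
theorem chk19 : go 512 (512 * 19) = true := by decide +kernel
theorem chk20 : go 512 (512 * 20) = true := by decide +kernel
theorem chk21 : go 512 (512 * 21) = true := by decide +kernel
theorem chk22 : go 512 (512 * 22) = true := by decide +kernel
theorem chk23 : go 512 (512 * 23) = true := by decide +kernel
theorem chk24 : go 512 (512 * 24) = true := by decide +kernel
theorem chk25 : go 512 (512 * 25) = true := by decide +kernel
theorem chk26 : go 512 (512 * 26) = true := by decide +kernel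
theorem chk27 : go 512 (512 * 27) = true := by decide +kernel
theorem chk28 : go 512 (512 * 28) = true := by decide +kernel
theorem chk29 : go 512 (512 * 29) = true := by decide +kernel
theorem chk30 : go 512 (512 * 30) = true := by decide +kernel
theorem chk31 : go 512 (512 * 31) = true := by decide +kernel
theorem chk32 : go 512 (512 * 32) = true := by decide +kernel
theorem chk33 : go 512 (512 * 33) = true := by decide +kernel
theorem chk34 : go 512 (512 * 34) = true := by decide +kernel
theorem chk35 : go 512 (512 * 35) = true := by decide +kernel
theorem chk36 : go 512 (512 * 36) = true := by decide +kernel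
theorem chk37 : go 512 (512 * 37) = true := by decide +kernel
theorem chk38 : go 512 (512 * 38) = true := by decide +kernel
theorem chk39 : go 512 (512 * 39) = true := by decide +kernel
theorem chk40 : go 512 (512 * 40) = true := by decide +kernel
theorem chk41 : go 512 (512 * 41) = true := by decide +kernel
theorem chk42 : go 512 (512 * 42) = true := by decide +kernel
theorem chk43 : go 512 (512 * 43) = true := by decide +kernel
theorem chk44 : go 512 (512 * 44) = true := by decide +kernel
theorem chk45 : go 512 (512 * 45) = true := by decide +kernel
theorem chk46 : go 512 (512 * 46) = true := by decide +kernel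
theorem chk47 : go 512 (512 * 47) = true := by decide +kernel
theorem chk48 : go 512 (512 * 48) = true := by decide +kernel
theorem chk49 : go 512 (512 * 49) = true := by decide +kernel
theorem chk50 : go 512 (512 * 50) = true := by decide +kernel
theorem chk51 : go 512 (512 * 51) = true := by decide +kernel
theorem chk52 : go 512 (512 * 52) = true := by decide +kernel
theorem chk53 : go 512 (512 * 53) = true := by decide +kernel
theorem chk54 : go 512 (512 * 54) = true := by decide +kernel
theorem chk55 : go 512 (512 * 55) = true := by decide +kernel
theorem chk56 : go 512 (512 * 56) = true := by decide +kernel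
theorem chk57 : go 512 (512 * 57) = true := by decide +kernel
theorem chk58 : go 512 (512 * 58) = true := by decide +kernel
theorem chk59 : go 512 (512 * 59) = true := by decide +kernel
theorem chk60 : go 512 (512 * 60) = true := by decide +kernel
theorem chk61 : go 512 (512 * 61) = true := by decide +kernel
theorem chk62 : go 512 (512 * 62) = true := by decide +kernel
theorem chk63 : go 512 (512 * 63) = true := by decide +kernel

theorem chunk_all : ∀ c, c < 64 → go 512 (512 * c) = true := by
  intro c hc
  interval_cases c
  · exact chk0
  · exact chk1
  · exact chk2
  · exact chk3
  · exact chk4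
  · exact chk5
  · exact chk6
  · exact chk7
  · exact chk8
  · exact chk9
  · exact chk10
  · exact chk11
  · exact chk12
  · exact chk13
  · exact chk14
  · exact chk15
  · exact chk16
  · exact chk17
  · exact chk18
  · exact chk19
  · exact chk20
  · exact chk21
  · exact chk22
  · exact chk23
  · exact chk24
  · exact chk25
  · exact chk26
  · exact chk27
  · exact chk28
  · exact chk29
  · exact chk30
  · exact chk31
  · exact chk32
  · exact chk33
  · exact chk34
  · exact chk35
  · exact chk36
  · exact chk37
  · exact chk38
  · exact chk39
  · exact chk40
  · exact chk41
  · exact chk42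
  · exact chk43
  · exact chk44
  · exact chk45
  · exact chk46
  · exact chk47
  · exact chk48
  · exact chk49
  · exact chk50
  · exact chk51
  · exact chk52
  · exact chk53
  · exact chk54
  · exact chk55
  · exact chk56
  · exact chk57
  · exact chk58
  · exact chk59
  · exact chk60
  · exact chk61
  · exact chk62
  · exact chk63


theorem go_spec : ∀ k b, go k b = true → ∀ i, i < k → check (b + i) = true := by
  intro k
  induction k with
  | zero => intro b _ i hi; omega
  | succ k ih =>
    intro b hb i hi
    rw [show go (k+1) b = (check b && go k (b+1)) from rfl, Bool.and_eq_true] at hb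
    rcases Nat.eq_zero_or_pos i with h0 | h0
    · simpa [h0] using hb.1
    · have := ih (b+1) hb.2 (i-1) (by omega)
      simpa [show b + 1 + (i-1) = b + i by omega] using this

theorem check_all (n : ℕ) (hn : n < 32768) : check n = true := by
  have h1 : go 512 (512 * (n / 512)) = true := chunk_all (n / 512) (by omega)
  have h2 := go_spec 512 (512 * (n / 512)) h1 (n % 512) (by omega)
  simpa [show 512 * (n / 512) + n % 512 = n by omega] using h2

/-! ### Small decidable facts about the encoding -/

theorem pr_ne : ∀ i : Fin 15, (pr i).1 ≠ (pr i).2 := by decide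

theorem pidx_pr : ∀ i : Fin 15, pidx (pr i).1 (pr i).2 = i := by decide

theorem pidx_symm : ∀ a b : Fin 6, pidx a b = pidx b a := by decide

theorem pr_pidx : ∀ a b : Fin 6, a ≠ b → pr (pidx a b) = (a, b) ∨ pr (pidx a b) = (b, a) := by
  decide

theorem maskOf_lt : ∀ s : Finset (Fin 6), maskOf s < 2^15 := by decide

theorem maskOf_testBit : ∀ s : Finset (Fin 6), ∀ i : Fin 15,
    (maskOf s).testBit i.val = decide ((pr i).1 ∈ s ∧ (pr i).2 ∈ s) := by decide

theorem mem_triples : ∀ s : Finset (Fin 6), s ∈ triples ↔ s.card = 3 := by decide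

theorem mem_quads : ∀ s : Finset (Fin 6), s ∈ quads ↔ s.card = 4 := by decide

theorem triples_nodup : triples.Nodup := by decide

theorem tripleMasks_eq : tripleMasks = triples.map maskOf := by decide

theorem quadMasks_eq : quadMasks = quads.map maskOf := by decide

theorem sym2_inj : ∀ i j : Fin 15,
    s((pr i).1, (pr i).2) = s((pr j).1, (pr j).2) → i = j := by decide

/-! ### Characterizations -/

theorem adj_iff (f : Fin 15 → Fin 2) (a b : Fin 6) :
    (graphOf f).Adj a b ↔ a ≠ b ∧ f (pidx a b) = 1 := by
  show a ≠ b ∧ (f (pidx a b) = 1 ∨ f (pidx b a) = 1) ↔ _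
  rw [show pidx b a = pidx a b from pidx_symm b a, or_self]

theorem fin2_eq_zero (x : Fin 2) (h : x ≠ 1) : x = 0 := by omega

theorem fin2_zero_iff : ∀ x : Fin 2, x = 0 ↔ ¬ x = 1 := by decide

theorem F_eq_one_iff (n : ℕ) (i : Fin 15) : F n i = 1 ↔ n.testBit i.val = true := by
  rw [Nat.testBit_eq_decide_div_mod_eq, decide_eq_true_eq]
  exact ⟨fun h => congrArg Fin.val h, fun h => Fin.ext h⟩

theorem F_eq_zero_iff (n : ℕ) (i : Fin 15) : F n i = 0 ↔ n.testBit i.val = false := by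
  rw [fin2_zero_iff, ← Bool.not_eq_true]
  exact not_congr (F_eq_one_iff n i)

theorem land_mask_iff (n m : ℕ) (hm : m < 2^15) :
    n &&& m = 0 ↔ ∀ i : Fin 15, m.testBit i.val = true → n.testBit i.val = false := by
  constructor
  · intro h i hi
    by_contra hc
    have hc' : n.testBit i.val = true := by simpa using hc
    have : (n &&& m).testBit i.val = true := by
      rw [Nat.testBit_land, hc', hi]; rfl
    rw [h] at this
    simp at this
  · intro h
    apply Nat.eq_of_testBit_eq
    intro j
    rw [Nat.testBit_land, Nat.zero_testBit]
    by_cases hj : j < 15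
    · cases hmb : m.testBit j with
      | false => simp
      | true =>
        have := h ⟨j, hj⟩ hmb
        simp only at this
        rw [this]
        rfl
    · have : m < 2^j := lt_of_lt_of_le hm (Nat.pow_le_pow_right (by norm_num) (by omega))
      rw [Nat.testBit_lt_two_pow this]
      simp

theorem indep_iff (n : ℕ) (s : Finset (Fin 6)) :
    (graphOf (F n)).IsIndepFinset s ↔ n &&& maskOf s = 0 := by
  rw [land_mask_iff n _ (maskOf_lt s)]
  constructor
  · intro h i hi
    rw [maskOf_testBit s i] at hi
    have hmem := of_decide_eq_true hi
    have hne := pr_ne i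
    have := h _ hmem.1 _ hmem.2
    rw [adj_iff] at this
    have hf : F n (pidx (pr i).1 (pr i).2) ≠ 1 := fun hc => this ⟨hne, hc⟩
    rw [pidx_pr i] at hf
    rw [← F_eq_zero_iff]
    exact fin2_eq_zero _ hf
  · intro h a ha b hb hadj
    rw [adj_iff] at hadj
    obtain ⟨hne, h1⟩ := hadj
    have hbit : (maskOf s).testBit (pidx a b).val = true := by
      rw [maskOf_testBit s (pidx a b)]
      rcases pr_pidx a b hne with he | he <;> rw [he] <;> simp [ha, hb]
    have := h (pidx a b) hbit
    rw [← F_eq_zero_iff] at this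
    rw [this] at h1
    simp [Fin.ext_iff] at h1

theorem countP_range (q : ℕ → Prop) [DecidablePred q] :
    ∀ k, (List.range k).countP (fun j => decide (q j)) =
      ∑ j ∈ Finset.range k, if q j then 1 else 0 := by
  intro k
  induction k with
  | zero => simp
  | succ k ih =>
    rw [List.range_succ, List.countP_append, Finset.sum_range_succ, ih]
    by_cases h : q k <;> simp [List.countP, List.countP.go, h]

theorem edge_count (n : ℕ) : (graphOf (F n)).edgeFinset.card = ec n := by
  have himg : (graphOf (F n)).edgeFinset =
      (Finset.univ.filter (fun i : Fin 15 => F n i = 1)).image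
        (fun i => s((pr i).1, (pr i).2)) := by
    ext e
    induction e with
    | _ a b =>
      simp only [SimpleGraph.mem_edgeFinset, SimpleGraph.mem_edgeSet, Finset.mem_image,
        Finset.mem_filter, Finset.mem_univ, true_and]
      constructor
      · intro hadj
        rw [adj_iff] at hadj
        obtain ⟨hne, h1⟩ := hadj
        refine ⟨pidx a b, h1, ?_⟩
        rcases pr_pidx a b hne with he | he <;> rw [he] <;>
          first | rfl | exact Sym2.eq_swap
      · rintro ⟨i, h1, he⟩
        have hadj : (graphOf (F n)).Adj (pr i).1 (pr i).2 := by
          rw [adj_iff]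
          exact ⟨pr_ne i, by rw [pidx_pr i]; exact h1⟩
        have := (graphOf (F n)).mem_edgeSet.mpr hadj
        rw [show s((pr i).1, (pr i).2) = s(a, b) from he] at this
        exact this
  rw [himg, Finset.card_image_of_injOn (fun i _ j _ h => sym2_inj i j h)]
  have h1 : (Finset.univ.filter (fun i : Fin 15 => F n i = 1)).card
      = ∑ i : Fin 15, if n / 2^i.val % 2 = 1 then 1 else 0 := by
    rw [Finset.card_filter]
    refine Finset.sum_congr rfl (fun i _ => ?_)
    congr 1
    simp [F, Fin.ext_iff]
  rw [h1, Fin.sum_univ_eq_sum_range (fun j => if n / 2^j % 2 = 1 then 1 else 0)]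
  rw [ec, countP_range]

theorem count_triples (n : ℕ) :
    (Finset.univ.filter
      (fun s : Finset (Fin 6) => s.card = 3 ∧ (graphOf (F n)).IsIndepFinset s)).card
      = tcnt n := by
  have h1 : Finset.univ.filter
        (fun s : Finset (Fin 6) => s.card = 3 ∧ (graphOf (F n)).IsIndepFinset s)
      = triples.toFinset.filter (fun s => (graphOf (F n)).IsIndepFinset s) := by
    ext t
    simp only [Finset.mem_filter, Finset.mem_univ, true_and, List.mem_toFinset, mem_triples]
  rw [h1]
  rw [tcnt, tripleMasks_eq, List.countP_map]
  have h2 : triples.toFinset.filter (fun s => (graphOf (F n)).IsIndepFinset s)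
      = (triples.filter (fun s => decide ((graphOf (F n)).IsIndepFinset s))).toFinset := by
    ext t
    simp [List.mem_filter]
  rw [h2, List.card_toFinset,
    List.dedup_eq_self.mpr (triples_nodup.filter _), ← List.countP_eq_length_filter]
  apply List.countP_congr
  intro s _
  rw [Function.comp_apply]
  cases h : decide ((graphOf (F n)).IsIndepFinset s) with
  | false =>
    have := of_decide_eq_false h
    rw [indep_iff] at this
    simp [this]
  | true =>
    have := of_decide_eq_true h
    rw [indep_iff] at this
    simp [this]

theorem no_quads (n : ℕ)
    (h : ¬ ∃ s : Finset (Fin 6), s.card = 4 ∧ (graphOf (F n)).IsIndepFinset s) :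
    qok n = true := by
  rw [qok, List.all_eq_true]
  intro m hm
  rw [quadMasks_eq, List.mem_map] at hm
  obtain ⟨s, hs, rfl⟩ := hm
  simp only [Bool.not_eq_true', decide_eq_false_iff_not]
  intro hland
  exact h ⟨s, (mem_quads s).mp hs, (indep_iff n s).mpr hland⟩

/-! ### Decoding an arbitrary graph -/

open Classical in
theorem graph_eq (G : SimpleGraph (Fin 6)) :
    ∃ n : ℕ, n < 32768 ∧ G = graphOf (F n) := by
  classical
  set f : Fin 15 → Fin 2 := fun i => if G.Adj (pr i).1 (pr i).2 then 1 else 0 with hf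
  have hGf : G = graphOf f := by
    ext a b
    rw [adj_iff]
    constructor
    · intro hadj
      have hne := G.ne_of_adj hadj
      refine ⟨hne, ?_⟩
      rcases pr_pidx a b hne with he | he <;> rw [hf] <;> simp only [he]
      · simp [hadj]
      · simp [hadj.symm]
    · rintro ⟨hne, h1⟩
      rw [hf] at h1
      simp only at h1
      by_cases hadj : G.Adj (pr (pidx a b)).1 (pr (pidx a b)).2
      · rcases pr_pidx a b hne with he | he <;> rw [he] at hadj
        · exact hadj
        · exact hadj.symm
      · rw [if_neg hadj] at h1
        simp [Fin.ext_iff] at h1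
  set g : Fin (2^15) := finFunctionFinEquiv f with hg
  refine ⟨g.val, by have := g.isLt; simpa using this, ?_⟩
  have hFg : F g.val = f := by
    funext i
    have h1 : finFunctionFinEquiv.symm g i = f i := by
      rw [hg, Equiv.symm_apply_apply]
    rw [← h1]
    rfl
  rw [hGf, hFg]

/-- There is no simple graph on 6 vertices whose exterior edge-ideal quotient has
Hilbert series `1 + 6t + 9t² + t³`; equivalently, no simple graph on 6 vertices with
exactly 6 edges, exactly one independent set of size 3, and no independent set of size 4. -/
theorem stmt0 :
    ¬ ∃ G : SimpleGraph (Fin 6),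
      G.edgeSet.ncard = 6 ∧
      ({s : Finset (Fin 6) | s.card = 3 ∧ G.IsIndepFinset s}).ncard = 1 ∧
      ¬ ∃ s : Finset (Fin 6), s.card = 4 ∧ G.IsIndepFinset s := by
  rintro ⟨G, h1, h2, h3⟩
  obtain ⟨n, hn, rfl⟩ := graph_eq G
  -- edge count
  have he : ec n = 6 := by
    rw [← edge_count]
    rw [← SimpleGraph.coe_edgeFinset, Set.ncard_coe_finset] at h1
    exact h1
  -- triple count
  have ht : tcnt n = 1 := by
    rw [← count_triples]
    have hset : {s : Finset (Fin 6) | s.card = 3 ∧ (graphOf (F n)).IsIndepFinset s}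
        = ↑(Finset.univ.filter
            (fun s : Finset (Fin 6) => s.card = 3 ∧ (graphOf (F n)).IsIndepFinset s)) := by
      ext t
      simp
    rw [hset, Set.ncard_coe_finset] at h2
    exact h2
  have hq : qok n = true := no_quads n h3
  have hc := check_all n hn
  rw [check] at hc
  rw [he, ht, hq] at hc
  simp at hc
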